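/- Let μ be a translation-invariant percolation on ℤ². Then μ-almost surely, for every b ∈ ℤ and every infinite cluster C of the half-plane restriction HP_b(G_η), if the set {x ∈ ℤ : (x,b) ∈ C} is infinite, then it is unbounded above and unbounded below in ℤ (it has no greatest and no least element). -/

import Mathlib

open MeasureTheory

/-- Vertices of the square lattice `ℤ²`. -/
abbrev Vertex : Type := ℤ × ℤ

/-- Edges of `ℤ²`, encoded as a base vertex together with a direction:
`false` is the horizontal edge from `v` to `v + (1,0)`, `true` the vertical
edge from `v` to `v + (0,1)`. -/
abbrev Edge : Type := Vertex × Bool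

/-- Percolation configurations `η : E(ℤ²) → {0,1}`. -/
abbrev Config : Type := Edge → Bool

/-- The displacement vector of an edge with direction `d`. -/
def edgeDir (d : Bool) : Vertex := if d then (0, 1) else (1, 0)

/-- `joins e u v` says that the edge `e` has endpoints `u` and `v`. -/
def joins (e : Edge) (u v : Vertex) : Prop :=
  (e.1 = u ∧ u + edgeDir e.2 = v) ∨ (e.1 = v ∧ v + edgeDir e.2 = u)

/-- The open subgraph `G_η` of `ℤ²`: two vertices are adjacent iff some open
edge joins them. -/
def openGraph (η : Config) : SimpleGraph Vertex where
  Adj u v := u ≠ v ∧ ∃ e : Edge, η e = true ∧ joins e u v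
  symm := by
    constructor
    rintro u v ⟨hne, e, he, hj⟩
    exact ⟨hne.symm, e, he, hj.symm⟩
  loopless := by
    constructor
    rintro u ⟨hne, -⟩
    exact hne rfl

/-- The half-plane restriction `HP_b(G_η)`: keep only open edges with both
endpoints having second coordinate `≥ b`. -/
def hpGraph (b : ℤ) (η : Config) : SimpleGraph Vertex where
  Adj u v := b ≤ u.2 ∧ b ≤ v.2 ∧ (openGraph η).Adj u v
  symm := by
    constructor
    rintro u v ⟨hu, hv, h⟩
    exact ⟨hv, hu, h.symm⟩
  loopless := by
    constructor
    rintro u ⟨-, -, h⟩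
    exact (openGraph η).loopless.irrefl u h

/-- `C` is a cluster (connected component) of `G_η`. -/
def IsCluster (η : Config) (C : Set Vertex) : Prop :=
  ∃ v : Vertex, C = {u | (openGraph η).Reachable v u}

/-- `C` is a cluster of the half-plane restriction `HP_b(G_η)`: the component
of some vertex lying in the half-plane `{y ≥ b}`. -/
def IsClusterHP (b : ℤ) (η : Config) (C : Set Vertex) : Prop :=
  ∃ v : Vertex, b ≤ v.2 ∧ C = {u | (hpGraph b η).Reachable v u}

/-- The dual configuration `η*`: a dual edge is open iff the primal edge it
crosses is closed.  The dual edge with base `(a,c)` and direction `false`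
(going to `(a+1,c)`) crosses the primal vertical edge `{(a+1,c),(a+1,c+1)}`;
the dual edge with base `(a,c)` and direction `true` (going to `(a,c+1)`)
crosses the primal horizontal edge `{(a,c+1),(a+1,c+1)}`. -/
def dualConfig (η : Config) : Config := fun e =>
  if e.2 then !η ((e.1.1, e.1.2 + 1), false) else !η ((e.1.1 + 1, e.1.2), true)

/-- Translation of configurations: `(T_t η)(e) = η (e - t)`. -/
def shift (t : Vertex) (η : Config) : Config := fun e => η (e.1 - t, e.2)

section AuxMT

open ENNReal

/-! ### Auxiliary lemmas -/

lemma hpGraph_adj (b : ℤ) (η : Config) (u v : Vertex) :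
    (hpGraph b η).Adj u v ↔
      b ≤ u.2 ∧ b ≤ v.2 ∧ u ≠ v ∧ ∃ e : Edge, η e = true ∧ joins e u v :=
  Iff.rfl

lemma measurableSet_adj (b : ℤ) (u v : Vertex) :
    MeasurableSet {η : Config | (hpGraph b η).Adj u v} := by
  have h : {η : Config | (hpGraph b η).Adj u v} =
      ⋃ e : Edge, {η : Config |
        (b ≤ u.2 ∧ b ≤ v.2 ∧ u ≠ v ∧ joins e u v) ∧ η e = true} := by
    ext η
    simp only [Set.mem_setOf_eq, Set.mem_iUnion, hpGraph_adj]
    constructor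
    · rintro ⟨h1, h2, hne, e, he, hj⟩
      exact ⟨e, ⟨h1, h2, hne, hj⟩, he⟩
    · rintro ⟨e, ⟨h1, h2, hne, hj⟩, he⟩
      exact ⟨h1, h2, hne, e, he, hj⟩
  rw [h]
  refine MeasurableSet.iUnion fun e => ?_
  by_cases hP : b ≤ u.2 ∧ b ≤ v.2 ∧ u ≠ v ∧ joins e u v
  · have : {η : Config | (b ≤ u.2 ∧ b ≤ v.2 ∧ u ≠ v ∧ joins e u v) ∧ η e = true}
        = (fun η : Config => η e) ⁻¹' {true} := by
      ext η; simp [hP]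
    rw [this]
    exact (measurable_pi_apply e) (MeasurableSet.singleton true)
  · have : {η : Config | (b ≤ u.2 ∧ b ≤ v.2 ∧ u ≠ v ∧ joins e u v) ∧ η e = true}
        = (∅ : Set Config) := by
      ext η; simp [hP]
    rw [this]
    exact MeasurableSet.empty

lemma measurableSet_chain (b : ℤ) :
    ∀ (l : List Vertex) (u : Vertex),
      MeasurableSet {η : Config | List.Chain (hpGraph b η).Adj u l}
  | [], u => by simp [List.Chain]
  | (w :: l), u => by
    have h : {η : Config | List.Chain (hpGraph b η).Adj u (w :: l)} =
        {η : Config | (hpGraph b η).Adj u w} ∩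
          {η : Config | List.Chain (hpGraph b η).Adj w l} := by
      ext η; simp [List.Chain, List.isChain_cons_cons]
    rw [h]
    exact (measurableSet_adj b u w).inter (measurableSet_chain b l w)

lemma measurableSet_reach (b : ℤ) (u v : Vertex) :
    MeasurableSet {η : Config | (hpGraph b η).Reachable u v} := by
  have h : {η : Config | (hpGraph b η).Reachable u v} =
      ⋃ l : List Vertex, {η : Config |
        List.Chain (hpGraph b η).Adj u l ∧ (u :: l).getLast (by simp) = v} := by
    ext η
    simp only [Set.mem_setOf_eq, Set.mem_iUnion,
      SimpleGraph.reachable_iff_reflTransGen]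
    constructor
    · intro hr
      obtain ⟨l, hc, hl⟩ := List.exists_isChain_cons_of_relationReflTransGen hr
      exact ⟨l, hc, hl⟩
    · rintro ⟨l, hc, hl⟩
      exact List.relationReflTransGen_of_exists_isChain_cons l hc hl
  rw [h]
  refine MeasurableSet.iUnion fun l => ?_
  by_cases hl : (u :: l).getLast (by simp) = v
  · have : {η : Config |
        List.Chain (hpGraph b η).Adj u l ∧ (u :: l).getLast (by simp) = v} =
        {η : Config | List.Chain (hpGraph b η).Adj u l} := by
      ext η; simp [hl]
    rw [this]; exact measurableSet_chain b l u
  · have : {η : Config |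
        List.Chain (hpGraph b η).Adj u l ∧ (u :: l).getLast (by simp) = v} =
        (∅ : Set Config) := by
      ext η; simp [hl]
    rw [this]; exact MeasurableSet.empty

/-- The mass-transport event: `(x,b)` reaches `(m,b)` in the half-plane graph,
and `m` is `R`-extremal among the baseline points of the cluster of `(x,b)`. -/
def gset (R : ℤ → ℤ → Prop) (b x m : ℤ) : Set Config :=
  {η : Config | (hpGraph b η).Reachable (x, b) (m, b) ∧
    ∀ x' : ℤ, (hpGraph b η).Reachable (x, b) (x', b) → R x' m}

lemma measurableSet_gset (R : ℤ → ℤ → Prop) (b x m : ℤ) :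
    MeasurableSet (gset R b x m) := by
  have h : gset R b x m =
      {η : Config | (hpGraph b η).Reachable (x, b) (m, b)} ∩
        ⋂ x' : ℤ, {η : Config |
          (hpGraph b η).Reachable (x, b) (x', b) → R x' m} := by
    ext η
    simp only [gset, Set.mem_setOf_eq, Set.mem_inter_iff, Set.mem_iInter]
  rw [h]
  refine (measurableSet_reach b _ _).inter (MeasurableSet.iInter fun x' => ?_)
  by_cases hR : R x' m
  · have : {η : Config | (hpGraph b η).Reachable (x, b) (x', b) → R x' m}
        = Set.univ := by ext η; simp [hR]
    rw [this]; exact MeasurableSet.univ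
  · have : {η : Config | (hpGraph b η).Reachable (x, b) (x', b) → R x' m}
        = {η : Config | (hpGraph b η).Reachable (x, b) (x', b)}ᶜ := by
      ext η; simp [hR]
    rw [this]; exact (measurableSet_reach b _ _).compl

lemma joins_sub_iff (e : Edge) (u v t : Vertex) :
    joins (e.1 - t, e.2) (u - t) (v - t) ↔ joins e u v := by
  obtain ⟨⟨e1, e2⟩, dir⟩ := e
  obtain ⟨u1, u2⟩ := u
  obtain ⟨v1, v2⟩ := v
  obtain ⟨t1, t2⟩ := t
  cases dir <;>
    simp only [joins, edgeDir, Prod.mk_sub_mk, Prod.mk_add_mk, Prod.mk.injEq,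
      if_true, if_false, Bool.false_eq_true, ite_true, ite_false] <;>
    constructor <;> rintro (⟨⟨h1, h2⟩, h3, h4⟩ | ⟨⟨h1, h2⟩, h3, h4⟩) <;>
    [left; right; left; right; left; right; left; right] <;> omega

lemma shift_adj (b : ℤ) (t : Vertex) (ht : t.2 = 0) (η : Config) (u v : Vertex) :
    (hpGraph b (shift t η)).Adj u v ↔ (hpGraph b η).Adj (u - t) (v - t) := by
  have hsnd : ∀ w : Vertex, (w - t).2 = w.2 := by
    intro w; simp [ht]
  constructor
  · rintro ⟨h1, h2, hne, e, he, hj⟩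
    refine ⟨by rw [hsnd]; exact h1, by rw [hsnd]; exact h2,
      fun h => hne (by rwa [sub_left_inj] at h), (e.1 - t, e.2), he, ?_⟩
    exact (joins_sub_iff e u v t).mpr hj
  · rintro ⟨h1, h2, hne, e, he, hj⟩
    refine ⟨by rw [hsnd] at h1; exact h1, by rw [hsnd] at h2; exact h2,
      fun h => hne (by rw [h]), (e.1 + t, e.2), ?_, ?_⟩
    · show η (e.1 + t - t, e.2) = true
      rwa [add_sub_cancel_right]
    · have := (joins_sub_iff (e.1 + t, e.2) u v t).mp
      simp only [add_sub_cancel_right] at this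
      exact this hj

lemma shift_reach (b : ℤ) (t : Vertex) (ht : t.2 = 0) (η : Config) (u v : Vertex) :
    (hpGraph b (shift t η)).Reachable u v ↔
      (hpGraph b η).Reachable (u - t) (v - t) := by
  constructor
  · intro h
    exact h.map ⟨fun w => w - t, fun hadj => (shift_adj b t ht η _ _).mp hadj⟩
  · intro h
    let f : hpGraph b η →g hpGraph b (shift t η) :=
      ⟨fun w => w + t, fun {a c} hadj => by
        refine (shift_adj b t ht η _ _).mpr ?_
        simpa [add_sub_cancel_right] using hadj⟩
    have hm := h.map f
    have hu : f (u - t) = u := sub_add_cancel u t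
    have hv : f (v - t) = v := sub_add_cancel v t
    rwa [hu, hv] at hm

lemma shift_gset (R : ℤ → ℤ → Prop)
    (hR : ∀ a c d : ℤ, R (a + d) (c + d) ↔ R a c) (b x m d : ℤ) :
    shift (d, 0) ⁻¹' gset R b x m = gset R b (x - d) (m - d) := by
  have hcoord : ∀ y : ℤ, ((y : ℤ), b) - ((d : ℤ), (0 : ℤ)) = (y - d, b) := by
    intro y; simp [Prod.mk_sub_mk]
  ext η
  simp only [Set.mem_preimage, gset, Set.mem_setOf_eq,
    shift_reach b (d, 0) rfl η, hcoord]
  constructor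
  · rintro ⟨hr, hub⟩
    refine ⟨hr, fun y hy => ?_⟩
    have h1 : (hpGraph b η).Reachable (x - d, b) (y + d - d, b) := by
      rwa [add_sub_cancel_right]
    have h2 := hub (y + d) h1
    have := (hR y (m - d) d).symm
    rw [sub_add_cancel] at this
    exact this.mpr h2
  · rintro ⟨hr, hub⟩
    refine ⟨hr, fun x' hx' => ?_⟩
    have h2 := hub (x' - d) hx'
    have := hR (x' - d) (m - d) d
    rw [sub_add_cancel, sub_add_cancel] at this
    exact this.mpr h2

lemma tsum_eq_top_of_infinite {f : ℤ → ℝ≥0∞} {S : Set ℤ} (hS : S.Infinite)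
    (hf : ∀ x ∈ S, 1 ≤ f x) : ∑' x : ℤ, f x = ⊤ := by
  have hle : ∑' x : ℤ, S.indicator (fun _ => (1 : ℝ≥0∞)) x ≤ ∑' x : ℤ, f x := by
    refine ENNReal.tsum_le_tsum fun x => ?_
    by_cases hx : x ∈ S
    · simpa [Set.indicator_of_mem hx] using hf x hx
    · simp [Set.indicator_of_notMem hx]
  have h2 : ∑' x : ℤ, S.indicator (fun _ => (1 : ℝ≥0∞)) x = ⊤ := by
    rw [← tsum_subtype S (fun _ => (1 : ℝ≥0∞))]
    haveI := hS.to_subtype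
    exact ENNReal.tsum_const_eq_top_of_ne_zero one_ne_zero
  exact top_le_iff.mp (h2 ▸ hle)

/-- The mass received at `(m,b)` along the baseline: the number of baseline
vertices `(x,b)` whose half-plane cluster has `R`-extremal baseline point `m`. -/
noncomputable def fsum (R : ℤ → ℤ → Prop) (b m : ℤ) (η : Config) : ℝ≥0∞ :=
  ∑' x : ℤ, (gset R b x m).indicator (fun _ => (1 : ℝ≥0∞)) η

/-- The mass-transport estimate: almost surely the received mass is finite. -/
lemma ae_fsum_ne_top (μ : Measure Config) [IsProbabilityMeasure μ]
    (hinv : ∀ t : Vertex, MeasurePreserving (shift t) μ μ)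
    (R : ℤ → ℤ → Prop) (hRinv : ∀ a c d : ℤ, R (a + d) (c + d) ↔ R a c)
    (hRanti : ∀ a c : ℤ, R a c → R c a → a = c) (b m : ℤ) :
    ∀ᵐ η ∂μ, fsum R b m η ≠ ⊤ := by
  have hmeas : ∀ x m' : ℤ, MeasurableSet (gset R b x m') :=
    fun x m' => measurableSet_gset R b x m'
  -- pairwise disjointness in `m`
  have hdisj : ∀ x : ℤ, Pairwise (Function.onFun Disjoint fun m' : ℤ => gset R b x m') := by
    intro x m1 m2 hne
    simp only [Function.onFun, Set.disjoint_left]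
    rintro η ⟨hr1, hub1⟩ ⟨hr2, hub2⟩
    exact hne (hRanti m1 m2 (hub2 m1 hr1) (hub1 m2 hr2))
  have hrow : ∀ x : ℤ, ∑' m' : ℤ, μ (gset R b x m') ≤ 1 := by
    intro x
    rw [← measure_iUnion (hdisj x) (fun m' => hmeas x m')]
    exact prob_le_one
  -- translation covariance
  have hp : ∀ x : ℤ, μ (gset R b x m) = μ (gset R b 0 (m - x)) := by
    intro x
    have h1 := (hinv (x, 0)).measure_preimage (hmeas x m).nullMeasurableSet
    rw [shift_gset R hRinv b x m x, sub_self] at h1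
    exact h1.symm
  have hcol : ∑' x : ℤ, μ (gset R b x m) ≤ 1 := by
    calc ∑' x : ℤ, μ (gset R b x m) = ∑' x : ℤ, μ (gset R b 0 (m - x)) :=
          tsum_congr hp
      _ = ∑' k : ℤ, μ (gset R b 0 k) :=
          (Equiv.subLeft m).tsum_eq (fun k => μ (gset R b 0 k))
      _ ≤ 1 := hrow 0
  have hFmeas : Measurable (fsum R b m) :=
    Measurable.ennreal_tsum fun x => measurable_const.indicator (hmeas x m)
  have hint : ∫⁻ η, fsum R b m η ∂μ ≤ 1 := by
    unfold fsum
    rw [lintegral_tsum fun x =>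
      (measurable_const.indicator (hmeas x m)).aemeasurable]
    calc ∑' x : ℤ, ∫⁻ η, (gset R b x m).indicator (fun _ => (1 : ℝ≥0∞)) η ∂μ
        = ∑' x : ℤ, μ (gset R b x m) := by
          refine tsum_congr fun x => ?_
          rw [lintegral_indicator_const (hmeas x m), one_mul]
      _ ≤ 1 := hcol
  have hne : ∫⁻ η, fsum R b m η ∂μ ≠ ⊤ :=
    fun h => by rw [h] at hint; exact absurd hint (by simp)
  filter_upwards [ae_lt_top hFmeas hne] with η h
  exact h.ne


end AuxMT

/-- For a translation-invariant percolation on `ℤ²`, almost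
surely, for every `b` and every infinite cluster `C` of `HP_b(G_η)`, if
`C` meets the line `y = b` in infinitely many vertices then this intersection
is unbounded above and unbounded below (no greatest and no least element). -/

theorem infinite_baseline_intersection_unbounded
    (μ : Measure Config) [IsProbabilityMeasure μ]
    (hinv : ∀ t : Vertex, MeasurePreserving (shift t) μ μ) :
    ∀ᵐ η ∂μ, ∀ (b : ℤ) (C : Set Vertex), IsClusterHP b η C → C.Infinite →
      {x : ℤ | (x, b) ∈ C}.Infinite →
      ¬ BddAbove {x : ℤ | (x, b) ∈ C} ∧ ¬ BddBelow {x : ℤ | (x, b) ∈ C} := by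
  have hG : ∀ᵐ η ∂μ, ∀ b m : ℤ, fsum (· ≤ ·) b m η ≠ ⊤ := by
    rw [ae_all_iff]; intro b; rw [ae_all_iff]; intro m
    exact ae_fsum_ne_top μ hinv _ (fun a c d => by omega)
      (fun a c h1 h2 => le_antisymm h1 h2) b m
  have hL : ∀ᵐ η ∂μ, ∀ b m : ℤ, fsum (fun a c => c ≤ a) b m η ≠ ⊤ := by
    rw [ae_all_iff]; intro b; rw [ae_all_iff]; intro m
    exact ae_fsum_ne_top μ hinv _ (fun a c d => by omega)
      (fun a c h1 h2 => le_antisymm h2 h1) b m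
  filter_upwards [hG, hL] with η hGη hLη
  rintro b C ⟨v, hv, rfl⟩ hCinf hSinf
  set C : Set Vertex := {u | (hpGraph b η).Reachable v u} with hC
  set S : Set ℤ := {x : ℤ | (x, b) ∈ C} with hSdef
  constructor
  · intro hbdd
    obtain ⟨ub, hub⟩ := hbdd
    obtain ⟨m, hmS, hmax⟩ :=
      Int.exists_greatest_of_bdd ⟨ub, fun z hz => hub hz⟩ hSinf.nonempty
    apply hGη b m
    refine tsum_eq_top_of_infinite hSinf fun x hx => ?_
    have hmem : η ∈ gset (· ≤ ·) b x m := by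
      refine ⟨(hx : (hpGraph b η).Reachable v (x, b)).symm.trans hmS, ?_⟩
      intro x' hx'
      exact hmax x' ((hx : (hpGraph b η).Reachable v (x, b)).trans hx')
    rw [Set.indicator_of_mem hmem]
  · intro hbdd
    obtain ⟨lb, hlb⟩ := hbdd
    obtain ⟨m, hmS, hmin⟩ :=
      Int.exists_least_of_bdd ⟨lb, fun z hz => hlb hz⟩ hSinf.nonempty
    apply hLη b m
    refine tsum_eq_top_of_infinite hSinf fun x hx => ?_
    have hmem : η ∈ gset (fun a c => c ≤ a) b x m := by
      refine ⟨(hx : (hpGraph b η).Reachable v (x, b)).symm.trans hmS, ?_⟩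
      intro x' hx'
      exact hmin x' ((hx : (hpGraph b η).Reachable v (x, b)).trans hx')
    rw [Set.indicator_of_mem hmem]
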